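/- Let z be a word of length ℓ over alphabet A and let u = u_m⋯u_0 be a word over A. Define H_{z,k}(u) = P_z(u) ⊙ Pow_z(k), where Pow_z(k) is the (ℓ+1)×(ℓ+1) matrix with entries q^{(j−i)k} for i ≤ j and 0 for i > j. Then H_{z,k}(u) = M_{u_m, k+m} · M_{u_{m−1}, k+m−1} ⋯ M_{u_0, k}. -/

import Mathlib

open Polynomial

/-- q-binomial on reversed words: first list = word with rightmost letter first,
matching the recursion (ua choose vb)_q = (u choose vb)_q * q^{|vb|} + [a=b](u choose v)_q. -/
noncomputable def qBaux {α : Type*} [DecidableEq α] : List α → List α → Polynomial ℕ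
  | _, [] => 1
  | [], _ :: _ => 0
  | a :: u, b :: v =>
      qBaux u (b :: v) * X ^ (v.length + 1) + if a = b then qBaux u v else 0

/-- q-binomial coefficient of words `u`, `v` given in natural reading order. -/
noncomputable def qB {α : Type*} [DecidableEq α] (u v : List α) : Polynomial ℕ :=
  qBaux u.reverse v.reverse

/-- The matrix M_{d,j}: identity plus q^j at positions (i,i+1) (0-based) where z_{i+1} = d. -/
noncomputable def entryM {α : Type*} [DecidableEq α] (n : ℕ) (z : List α) (d : α) (j : ℕ) :
    Matrix (Fin (n+1)) (Fin (n+1)) (Polynomial ℕ) :=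
  Matrix.of fun i i' =>
    if i = i' then 1
    else if (i' : ℕ) = (i : ℕ) + 1 ∧ z[(i : ℕ)]? = some d then X ^ j else 0

/-- The q-Parikh matrix of the word w = w_m ⋯ w_0 (natural reading order) induced by z:
P_z(w) = M_{w_m,m} ⋯ M_{w_0,0}. -/
noncomputable def Pm {α : Type*} [DecidableEq α] (n : ℕ) (z : List α) :
    List α → Matrix (Fin (n+1)) (Fin (n+1)) (Polynomial ℕ)
  | [] => 1
  | a :: t => entryM n z a t.length * Pm n z t

/-- The matrix Pow_z(k) with entries q^{(j-i)k} above (and on) the diagonal, 0 below. -/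
noncomputable def PowM (n k : ℕ) : Matrix (Fin (n+1)) (Fin (n+1)) (Polynomial ℕ) :=
  Matrix.of fun i j => if i ≤ j then X ^ (((j : ℕ) - (i : ℕ)) * k) else 0

/-- The shifted product M_{u_m, k+m} ⋯ M_{u_0, k}. -/
noncomputable def PmShift {α : Type*} [DecidableEq α] (n : ℕ) (z : List α) (k : ℕ) :
    List α → Matrix (Fin (n+1)) (Fin (n+1)) (Polynomial ℕ)
  | [] => 1
  | a :: t => entryM n z a (k + t.length) * PmShift n z k t

lemma entryM_mul_apply {α : Type*} [DecidableEq α] {n : ℕ} (z : List α) (a : α) (j : ℕ)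
    (P : Matrix (Fin (n+1)) (Fin (n+1)) (Polynomial ℕ)) (i i' : Fin (n+1)) :
    (entryM n z a j * P) i i' = P i i' +
      (if h : (i : ℕ) + 1 < n + 1 ∧ z[(i : ℕ)]? = some a then
        X ^ j * P ⟨(i : ℕ) + 1, h.1⟩ i' else 0) := by
  rw [Matrix.mul_apply]
  by_cases hc : (i : ℕ) + 1 < n + 1 ∧ z[(i : ℕ)]? = some a
  · rw [dif_pos hc]
    set i1 : Fin (n+1) := ⟨(i : ℕ) + 1, hc.1⟩ with hi1
    have hne : i ≠ i1 := by
      intro h; apply absurd (congrArg Fin.val h); simp [hi1]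
    rw [← Finset.add_sum_erase _ _ (Finset.mem_univ i)]
    congr 1
    · simp [entryM]
    · rw [Finset.sum_eq_single_of_mem i1 (Finset.mem_erase.2 ⟨hne.symm, Finset.mem_univ _⟩)]
      · have hv : (i1 : ℕ) = (i : ℕ) + 1 := rfl
        simp only [entryM, Matrix.of_apply]
        rw [if_neg hne, if_pos ⟨hv, hc.2⟩]
      · intro l hl hne1
        have h1 : i ≠ l := fun h => (Finset.mem_erase.1 hl).1 h.symm
        have h2 : ¬ ((l : ℕ) = (i : ℕ) + 1 ∧ z[(i : ℕ)]? = some a) := by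
          rintro ⟨h3, -⟩
          exact hne1 (Fin.ext h3)
        simp only [entryM, Matrix.of_apply]
        rw [if_neg h1, if_neg h2, zero_mul]
  · rw [dif_neg hc, Finset.sum_eq_single i]
    · simp [entryM]
    · intro l _ hne
      have h2 : ¬ ((l : ℕ) = (i : ℕ) + 1 ∧ z[(i : ℕ)]? = some a) := by
        rintro ⟨h3, h4⟩
        exact hc ⟨h3 ▸ l.isLt, h4⟩
      simp only [entryM, Matrix.of_apply]
      rw [if_neg (Ne.symm hne), if_neg h2, zero_mul]
    · intro h; exact absurd (Finset.mem_univ i) h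

lemma PmShift_lowtri {α : Type*} [DecidableEq α] {n : ℕ} (z : List α) (k : ℕ) (u : List α)
    (i j : Fin (n+1)) (hij : (j : ℕ) < (i : ℕ)) : PmShift n z k u i j = 0 := by
  induction u generalizing i with
  | nil =>
    have hne : i ≠ j := by intro h; subst h; omega
    simp [PmShift, Matrix.one_apply, hne]
  | cons a t ih =>
    rw [PmShift, entryM_mul_apply, ih i hij]
    split
    · rw [ih _ (by simp; omega)]; simp
    · simp

lemma PmShift_eq {α : Type*} [DecidableEq α] {n : ℕ} (z : List α) (k : ℕ) (u : List α)
    (i j : Fin (n+1)) :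
    PmShift n z k u i j = PmShift n z 0 u i j * X ^ (((j : ℕ) - (i : ℕ)) * k) := by
  induction u generalizing i j with
  | nil =>
    simp only [PmShift, Matrix.one_apply]
    split
    · next h => subst h; simp
    · simp
  | cons a t ih =>
    rw [PmShift, PmShift, entryM_mul_apply, entryM_mul_apply, ih i j]
    split
    · next h =>
      set i1 : Fin (n+1) := ⟨(i : ℕ) + 1, h.1⟩ with hi1
      rw [ih i1 j]
      rcases le_or_gt (j : ℕ) (i : ℕ) with hle | hlt
      · rw [PmShift_lowtri z 0 t i1 j (by simp [hi1]; omega)]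
        ring
      · have h1 : (i1 : ℕ) = (i : ℕ) + 1 := rfl
        have h2 : ((j : ℕ) - (i : ℕ)) * k = ((j : ℕ) - (i1 : ℕ)) * k + k := by
          rw [h1]
          have : (j : ℕ) - (i : ℕ) = ((j : ℕ) - ((i : ℕ) + 1)) + 1 := by omega
          rw [this]; ring
        rw [h2, Nat.zero_add, add_mul, pow_add]
        ring
    · rw [add_zero, add_zero]

lemma Pm_eq_PmShift {α : Type*} [DecidableEq α] {n : ℕ} (z : List α) (u : List α) :
    Pm n z u = PmShift n z 0 u := by
  induction u with
  | nil => rfl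
  | cons a t ih => simp [Pm, PmShift, ih, Nat.zero_add]

/-- H_{z,k}(u) := P_z(u) ⊙ Pow_z(k) equals M_{u_m,k+m} ⋯ M_{u_0,k}. -/
theorem stmt11 {α : Type*} [DecidableEq α] (z u : List α) (k : ℕ) (hu : ∀ a ∈ u, a ∈ z) :
    Matrix.hadamard (Pm z.length z u) (PowM z.length k) = PmShift z.length z k u := by
  refine Matrix.ext fun i j => ?_
  rw [Matrix.hadamard_apply, Pm_eq_PmShift, PowM, Matrix.of_apply]
  split
  · exact (PmShift_eq z k u i j).symm
  · next h =>
    rw [mul_zero, PmShift_lowtri z k u i j (by exact lt_of_not_ge h)]
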